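/- Let (X, φ) be a flow on a compact metric space, a : X → ℝ continuous, S = max over invariant probability measures m of ∫ a dm. Suppose u : X → ℝ is continuous and for all v ∈ X and t₁ ≤ t₂ one has u(φ_{t₂} v) − u(φ_{t₁} v) ≥ ∫_{t₁}^{t₂} a(φ_s v) ds − (t₂ − t₁)·S (a weak supersolution). Then for every invariant probability measure m attaining the maximum (∫ a dm = S), the function c(v, t) = ∫_0^t a(φ_s v) ds − t·S − (u(φ_t v) − u(v)) vanishes on the support of m for all t ≥ 0. -/

import Mathlib

open MeasureTheory

theorem stmt6 {X : Type*} [MetricSpace X] [CompactSpace X]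
    [MeasurableSpace X] [BorelSpace X]
    (φ : ℝ → X → X) (hflow : Continuous fun p : ℝ × X => φ p.1 p.2)
    (hφ0 : ∀ x, φ 0 x = x) (hφadd : ∀ s t x, φ (s + t) x = φ s (φ t x))
    (a : X → ℝ) (ha : Continuous a)
    (S : ℝ)
    (hS : ∀ m : Measure X, IsProbabilityMeasure m →
      (∀ t, MeasurePreserving (φ t) m m) → (∫ x, a x ∂m) ≤ S)
    (u : X → ℝ) (hu : Continuous u)
    (hsuper : ∀ v : X, ∀ t₁ t₂ : ℝ, t₁ ≤ t₂ →
      u (φ t₂ v) - u (φ t₁ v) ≥ (∫ s in t₁..t₂, a (φ s v)) - (t₂ - t₁) * S)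
    (m : Measure X) (hm : IsProbabilityMeasure m)
    (hminv : ∀ t, MeasurePreserving (φ t) m m)
    (hmax : (∫ x, a x ∂m) = S) :
    ∀ v : X, (∀ U : Set X, IsOpen U → v ∈ U → 0 < m U) →
      ∀ t : ℝ, 0 ≤ t →
        (∫ s in (0:ℝ)..t, a (φ s v)) - t * S - (u (φ t v) - u v) = 0 := by
  intro v hv t ht
  have hφc : ∀ s : ℝ, Continuous (φ s) := fun s =>
    hflow.comp (continuous_const.prodMk continuous_id)
  -- invariance of integrals of continuous functions
  have hinv : ∀ (f : X → ℝ), Continuous f → ∀ s : ℝ,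
      ∫ x, f (φ s x) ∂m = ∫ x, f x ∂m := by
    intro f hf s
    calc ∫ x, f (φ s x) ∂m = ∫ y, f y ∂(m.map (φ s)) :=
          (integral_map (hφc s).measurable.aemeasurable hf.aestronglyMeasurable).symm
      _ = ∫ x, f x ∂m := by rw [(hminv s).map_eq]
  set g : X → ℝ := fun x =>
    (∫ s in (0:ℝ)..t, a (φ s x)) - t * S - (u (φ t x) - u x) with hg
  have hcontI : Continuous fun x : X => ∫ s in (0:ℝ)..t, a (φ s x) := by
    apply intervalIntegral.continuous_parametric_intervalIntegral_of_continuous'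
    exact ha.comp (hflow.comp (continuous_snd.prodMk continuous_fst))
  have hcont : Continuous g :=
    ((hcontI.sub continuous_const).sub (((hu.comp (hφc t)).sub hu)))
  -- every continuous function is integrable
  have hintc : ∀ (f : X → ℝ), Continuous f → Integrable f m := by
    intro f hf
    exact hf.integrable_of_hasCompactSupport (IsClosed.isCompact (isClosed_tsupport f))
  -- Fubini: ∫ x, ∫_0^t a(φ s x) = t * S
  haveI hfin : IsFiniteMeasure (volume.restrict (Set.Ioc (0:ℝ) t)) := by
    constructor
    rw [Measure.restrict_apply_univ, Real.volume_Ioc]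
    exact ENNReal.ofReal_lt_top
  have hprodint : Integrable (Function.uncurry fun (x : X) (s : ℝ) => a (φ s x))
      (m.prod (volume.restrict (Set.Ioc (0:ℝ) t))) := by
    have hc : Continuous fun p : X × ℝ => a (φ p.2 p.1) :=
      ha.comp (hflow.comp (continuous_snd.prodMk continuous_fst))
    obtain ⟨C, hC⟩ := IsCompact.exists_bound_of_continuousOn isCompact_univ
      (ha.continuousOn (s := Set.univ))
    refine Integrable.mono' (integrable_const C) hc.aestronglyMeasurable ?_
    filter_upwards with p
    exact hC _ (Set.mem_univ _)
  have hfub : ∫ x, (∫ s in (0:ℝ)..t, a (φ s x)) ∂m = t * S := by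
    have h1 : ∀ x : X, (∫ s in (0:ℝ)..t, a (φ s x))
        = ∫ s in Set.Ioc (0:ℝ) t, a (φ s x) := fun x =>
      intervalIntegral.integral_of_le ht
    simp_rw [h1]
    rw [MeasureTheory.integral_integral_swap hprodint]
    have h2 : ∀ s : ℝ, ∫ x, a (φ s x) ∂m = S := fun s => by
      rw [hinv a ha s, hmax]
    simp_rw [h2]
    rw [setIntegral_const, measureReal_def, Real.volume_Ioc, smul_eq_mul,
      ENNReal.toReal_ofReal (by linarith)]
    ring
  -- integral of g is zero
  have i1 : Integrable (fun x => ∫ s in (0:ℝ)..t, a (φ s x)) m := hintc _ hcontI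
  have i2 : Integrable (fun x => u (φ t x)) m := hintc _ (hu.comp (hφc t))
  have i3 : Integrable u m := hintc _ hu
  have hgint : ∫ x, g x ∂m = 0 := by
    have e1 : ∫ x, g x ∂m
        = (∫ x, (∫ s in (0:ℝ)..t, a (φ s x)) ∂m) - (∫ _x, t * S ∂m)
          - ((∫ x, u (φ t x) ∂m) - ∫ x, u x ∂m) := by
      simp only [hg]
      rw [integral_sub (f := fun x => (∫ s in (0:ℝ)..t, a (φ s x)) - t * S)
          (g := fun x => u (φ t x) - u x) (i1.sub (integrable_const (t * S))) (i2.sub i3),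
        integral_sub (f := fun x => ∫ s in (0:ℝ)..t, a (φ s x))
          (g := fun _ => t * S) i1 (integrable_const (t * S)),
        integral_sub (f := fun x => u (φ t x)) (g := fun x => u x) i2 i3]
    rw [e1, hfub, hinv u hu t, integral_const]
    simp [measure_univ]
  -- g ≤ 0 everywhere
  have hgle : ∀ x, g x ≤ 0 := by
    intro x
    have := hsuper x 0 t ht
    rw [hφ0] at this
    simp only [hg, sub_zero] at this ⊢
    linarith
  -- hence -g = 0 a.e.
  have hae : ∀ᵐ x ∂m, g x = 0 := by
    have h := (integral_eq_zero_iff_of_nonneg (f := fun x => -g x)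
      (fun x => neg_nonneg.mpr (hgle x)) ((hintc _ hcont).neg)).mp
      (by rw [integral_neg, hgint, neg_zero])
    filter_upwards [h] with x hx
    have : -g x = 0 := hx
    linarith
  -- conclude pointwise at v
  by_contra hne
  have hlt : g v < 0 := lt_of_le_of_ne (hgle v) hne
  set U : Set X := g ⁻¹' Set.Iio 0 with hU
  have hUopen : IsOpen U := isOpen_Iio.preimage hcont
  have hvU : v ∈ U := hlt
  have hpos := hv U hUopen hvU
  have hnull : m {x | g x ≠ 0} = 0 := by
    have := hae
    rw [ae_iff] at this
    exact this
  have hsub : U ⊆ {x | g x ≠ 0} := by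
    intro x hx
    exact ne_of_lt hx
  have : m U ≤ m {x | g x ≠ 0} := measure_mono hsub
  rw [hnull] at this
  exact absurd (le_antisymm this zero_le) (ne_of_gt hpos)
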